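/- Let C₁ = |0⟩⟨1| be the 2×2 matrix [[0,1],[0,0]], let m ≥ 1, and let W be a nonzero Hermitian m×m complex matrix. Then there exist ξ ∈ ℂ^{2m} and t ∈ ℝ such that ⟨exp(−it(σ_z⊗W))ξ, (C₁⊗I_m) exp(−it(σ_z⊗W))ξ⟩ ≠ ⟨ξ, (C₁⊗I_m)ξ⟩. That is, the single-qubit coherence output is not invariant under the dephasing interaction with the environment. -/

import Mathlib

open Matrix NormedSpace
open scoped Kronecker

noncomputable section

def σz : Matrix (Fin 2) (Fin 2) ℂ := !![1, 0; 0, -1]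

/-- `C₁ = |0⟩⟨1|` -/
def C₁ : Matrix (Fin 2) (Fin 2) ℂ := !![0, 1; 0, 0]

/-- Sesquilinear forms transform by conjugation under evolution. -/
theorem aux_quad_conj {n : Type*} [Fintype n] (U N : Matrix n n ℂ) (ξ : n → ℂ) :
    star (U.mulVec ξ) ⬝ᵥ N.mulVec (U.mulVec ξ) = star ξ ⬝ᵥ (Uᴴ * N * U).mulVec ξ := by
  simp only [star_mulVec, dotProduct_mulVec, vecMul_vecMul, Matrix.mul_assoc]

/-- The single-qubit coherence output is not invariant under the dephasing interaction
`σ_z ⊗ W` with a nonzero Hermitian environment operator `W`. -/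
theorem single_qubit_coherence_not_invariant
    (m : ℕ) (hm : 1 ≤ m) (W : Matrix (Fin m) (Fin m) ℂ) (hW : W ≠ 0) (hWherm : Wᴴ = W) :
    ∃ (ξ : Fin 2 × Fin m → ℂ) (t : ℝ),
      star ((exp ((-Complex.I * (t : ℂ)) • (σz ⊗ₖ W))).mulVec ξ) ⬝ᵥ
          (C₁ ⊗ₖ (1 : Matrix (Fin m) (Fin m) ℂ)).mulVec
            ((exp ((-Complex.I * (t : ℂ)) • (σz ⊗ₖ W))).mulVec ξ) ≠
        star ξ ⬝ᵥ (C₁ ⊗ₖ (1 : Matrix (Fin m) (Fin m) ℂ)).mulVec ξ := by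
  letI : SeminormedRing (Matrix (Fin 2 × Fin m) (Fin 2 × Fin m) ℂ) := Matrix.linftyOpSemiNormedRing
  letI : NormedRing (Matrix (Fin 2 × Fin m) (Fin 2 × Fin m) ℂ) := Matrix.linftyOpNormedRing
  letI : NormedAlgebra ℂ (Matrix (Fin 2 × Fin m) (Fin 2 × Fin m) ℂ) := Matrix.linftyOpNormedAlgebra
  by_contra hcon
  push_neg at hcon
  -- pick a nonzero entry of W
  obtain ⟨i₀, j₀, hij⟩ : ∃ i j, W i j ≠ 0 := by
    by_contra h
    push_neg at h
    exact hW (by ext i j; simp [h i j])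
  set A : Matrix (Fin 2 × Fin m) (Fin 2 × Fin m) ℂ := σz ⊗ₖ W with hAdef
  set C : Matrix (Fin 2 × Fin m) (Fin 2 × Fin m) ℂ := C₁ ⊗ₖ (1 : Matrix (Fin m) (Fin m) ℂ)
    with hCdef
  set B₁ : Matrix (Fin 2 × Fin m) (Fin 2 × Fin m) ℂ := Complex.I • A with hB₁def
  set B₂ : Matrix (Fin 2 × Fin m) (Fin 2 × Fin m) ℂ := (-Complex.I) • A with hB₂def
  set ξ : Fin 2 × Fin m → ℂ :=
    Pi.single ((0 : Fin 2), i₀) 1 + Pi.single ((1 : Fin 2), j₀) 1 with hξdef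
  -- the quadratic form as a continuous linear map in the matrix
  set L : Matrix (Fin 2 × Fin m) (Fin 2 × Fin m) ℂ →ₗ[ℂ] ℂ :=
    { toFun := fun M => star ξ ⬝ᵥ M.mulVec ξ
      map_add' := fun M N => by simp [Matrix.add_mulVec, dotProduct_add]
      map_smul' := fun c M => by simp [Matrix.smul_mulVec, dotProduct_smul] } with hLdef
  set Lc := LinearMap.toContinuousLinearMap L with hLcdef
  -- complex-parametrised coherence output
  set G : ℂ → ℂ := fun z => Lc (exp (z • B₁) * C * exp (z • B₂)) with hGdef
  -- derivative of G at 0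
  have h1 : HasDerivAt (fun z : ℂ => exp (z • B₁)) B₁ 0 := by
    have := hasDerivAt_exp_smul_const (𝕂 := ℂ) B₁ 0
    simp at this
    exact this
  have h2 : HasDerivAt (fun z : ℂ => exp (z • B₂)) B₂ 0 := by
    have := hasDerivAt_exp_smul_const (𝕂 := ℂ) B₂ 0
    simp at this
    exact this
  have h3 : HasDerivAt (fun z : ℂ => exp (z • B₁) * C * exp (z • B₂))
      (B₁ * C + C * B₂) 0 := by
    have := (h1.mul_const C).mul h2
    simp at this
    exact this
  have hG : HasDerivAt G (Lc (B₁ * C + C * B₂)) 0 :=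
    Lc.hasFDerivAt.comp_hasDerivAt 0 h3
  have hGR : HasDerivAt (fun t : ℝ => G ↑t) (Lc (B₁ * C + C * B₂)) 0 := by
    have := hG.comp_ofReal (z := 0)
    simpa using this
  -- A is Hermitian
  have hAherm : Aᴴ = A := by
    rw [hAdef]
    ext ⟨a, i⟩ ⟨b, j⟩
    simp only [conjTranspose_apply, kroneckerMap_apply, star_mul']
    rw [show (star (W j i) : ℂ) = Wᴴ i j from rfl, hWherm]
    have : star (σz b a) = σz a b := by fin_cases a <;> fin_cases b <;> simp [σz]
    rw [this, mul_comm]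
  -- G of a real t is the coherence output
  have hGreal : ∀ t : ℝ,
      G ↑t = star ((exp ((-Complex.I * (t : ℂ)) • A)).mulVec ξ) ⬝ᵥ
          C.mulVec ((exp ((-Complex.I * (t : ℂ)) • A)).mulVec ξ) := by
    intro t
    have hU : (exp ((-Complex.I * (t : ℂ)) • A))ᴴ = exp (((t : ℂ)) • B₁) := by
      rw [← Matrix.exp_conjTranspose]
      congr 1
      rw [conjTranspose_smul, hAherm, hB₁def, smul_smul]
      congr 1
      simp [Complex.ext_iff]
    have h2' : (-Complex.I * (t : ℂ)) • A = ((t : ℂ)) • B₂ := by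
      rw [hB₂def, smul_smul]; ring_nf
    have hU2 : (exp (((t : ℂ)) • B₂))ᴴ = exp (((t : ℂ)) • B₁) := by
      rw [← h2']; exact hU
    rw [aux_quad_conj, h2', hU2, hGdef]
    rw [hLcdef, LinearMap.coe_toContinuousLinearMap']
    rfl
  -- the contradiction hypothesis makes t ↦ G t constant
  have hconst : (fun t : ℝ => G ↑t) = fun _ => star ξ ⬝ᵥ C.mulVec ξ := by
    funext t
    rw [hGreal t]
    exact hcon ξ t
  have hzero : HasDerivAt (fun t : ℝ => G ↑t) 0 0 := by
    rw [hconst]; exact hasDerivAt_const _ _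
  have hkey : Lc (B₁ * C + C * B₂) = 0 := hGR.unique hzero
  -- compute the derivative explicitly
  have hσC : σz * C₁ = C₁ := by
    ext a b; fin_cases a <;> fin_cases b <;> simp [σz, C₁, Matrix.mul_apply, Fin.sum_univ_two]
  have hCσ : C₁ * σz = -C₁ := by
    ext a b; fin_cases a <;> fin_cases b <;> simp [σz, C₁, Matrix.mul_apply, Fin.sum_univ_two]
  have hAC : A * C = C₁ ⊗ₖ W := by
    rw [hAdef, hCdef, ← Matrix.mul_kronecker_mul, Matrix.mul_one, hσC]
  have hCA : C * A = -(C₁ ⊗ₖ W) := by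
    rw [hAdef, hCdef, ← Matrix.mul_kronecker_mul, Matrix.one_mul, hCσ]
    ext ⟨a, i⟩ ⟨b, j⟩
    simp [kroneckerMap_apply]
  have hderiv : B₁ * C + C * B₂ = (2 * Complex.I) • (C₁ ⊗ₖ W) := by
    rw [hB₁def, hB₂def, Matrix.smul_mul, Matrix.mul_smul, hAC, hCA, smul_neg]
    module
  -- evaluate L at C₁ ⊗ₖ W
  have hstar : star ξ = ξ := by
    rw [hξdef]
    funext p
    simp only [Pi.add_apply, Pi.star_apply, star_add, Pi.single_apply]
    split_ifs <;> simp
  have hLval : L (C₁ ⊗ₖ W) = W i₀ j₀ := by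
    rw [hLdef]
    simp only [LinearMap.coe_mk, AddHom.coe_mk]
    rw [hstar, hξdef]
    simp [Matrix.mulVec_add, dotProduct_add, add_dotProduct, Matrix.mulVec_single,
      single_dotProduct, kroneckerMap_apply, C₁]
  rw [hderiv, _root_.map_smul] at hkey
  have hLcL : Lc (C₁ ⊗ₖ W) = L (C₁ ⊗ₖ W) := by
    rw [hLcdef, LinearMap.coe_toContinuousLinearMap']
  rw [hLcL, hLval, smul_eq_mul, mul_eq_zero] at hkey
  have h2I : (2 * Complex.I) ≠ 0 := by simp [Complex.I_ne_zero]
  exact hij (hkey.resolve_left h2I)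

end
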